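/- Let (U,Θ,ρ) be a probability space, N ∈ ℕ, Σ a symmetric positive definite N×N real matrix, and δ ∈ ℝ^N. Let M > 0 be a constant and let G_ε : U → ℝ^N (ε ∈ (0,1]), G^L : U → ℝ^N (L ∈ ℕ) and G_0 : U → ℝ^N be measurable maps, all bounded in absolute value by M on U, such that G_ε(z) → G_0(z) as ε → 0 and G^L(z) → G_0(z) as L → ∞, for every z ∈ U. Define Gibbs measures μ_ε and ν_L with densities proportional to exp(−Φ_ε) and exp(−Φ^L) with respect to ρ, where Φ_ε(z) = (1/2)⟨Σ^{-1}(δ − G_ε(z)), δ − G_ε(z)⟩ and Φ^L(z) = (1/2)⟨Σ^{-1}(δ − G^L(z)), δ − G^L(z)⟩. Then for any sequences ε_n → 0 and L_n → ∞, d_Hell(μ_{ε_n}, ν_{L_n}) → 0 as n → ∞. -/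

import Mathlib

open MeasureTheory Real Filter Matrix

/-- Euclidean norm on `ℝ^N`. -/
noncomputable def euclNorm {N : ℕ} (v : Fin N → ℝ) : ℝ := Real.sqrt (v ⬝ᵥ v)

/-- Least-squares potential `Φ(z) = ½ ⟨Σ⁻¹(δ - G z), δ - G z⟩`. -/
noncomputable def potential {U : Type*} {N : ℕ} (S : Matrix (Fin N) (Fin N) ℝ)
    (δ : Fin N → ℝ) (G : U → Fin N → ℝ) (z : U) : ℝ :=
  1 / 2 * ((S⁻¹).mulVec (δ - G z) ⬝ᵥ (δ - G z))

/-- Hellinger distance between two measures, absolutely continuous with respect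
to `ρ`, given by their densities `f, g`. -/
noncomputable def hellingerDist {U : Type*} [MeasurableSpace U] (ρ : Measure U)
    (f g : U → ℝ) : ℝ :=
  Real.sqrt (1 / 2 * ∫ z, (Real.sqrt (f z) - Real.sqrt (g z)) ^ 2 ∂ρ)

/-- Gibbs density `exp(-Φ)/Z` with `Z = ∫ exp(-Φ) dρ`. -/
noncomputable def gibbsDensity {U : Type*} [MeasurableSpace U] (ρ : Measure U)
    (Φ : U → ℝ) (z : U) : ℝ :=
  Real.exp (-Φ z) / ∫ w, Real.exp (-Φ w) ∂ρ

section Aux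

lemma continuous_pot {N : ℕ} (A : Matrix (Fin N) (Fin N) ℝ) (δ : Fin N → ℝ) :
    Continuous (fun g : Fin N → ℝ => 1 / 2 * (A.mulVec (δ - g) ⬝ᵥ (δ - g))) := by
  simp only [Matrix.mulVec, dotProduct]
  fun_prop

lemma abs_le_euclNorm {N : ℕ} (v : Fin N → ℝ) (i : Fin N) : |v i| ≤ euclNorm v := by
  rw [euclNorm, ← Real.sqrt_sq_eq_abs]
  apply Real.sqrt_le_sqrt
  rw [dotProduct, sq]
  exact Finset.single_le_sum (f := fun j => v j * v j)
    (fun j _ => mul_self_nonneg _) (Finset.mem_univ i)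

lemma dot_bound {N : ℕ} (A : Matrix (Fin N) (Fin N) ℝ) (v : Fin N → ℝ) (B : ℝ)
    (hB : ∀ i, |v i| ≤ B) :
    |A.mulVec v ⬝ᵥ v| ≤ (∑ i, ∑ j, |A i j|) * B ^ 2 := by
  have hB0 : ∀ i : Fin N, (0:ℝ) ≤ B := fun i => (abs_nonneg _).trans (hB i)
  have key : ∀ i, |A.mulVec v i| ≤ (∑ j, |A i j|) * B := by
    intro i
    have h : A.mulVec v i = ∑ j, A i j * v j := rfl
    rw [h, Finset.sum_mul]
    refine (Finset.abs_sum_le_sum_abs _ _).trans ?_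
    apply Finset.sum_le_sum
    intro j _
    rw [abs_mul]
    exact mul_le_mul_of_nonneg_left (hB j) (abs_nonneg _)
  calc |A.mulVec v ⬝ᵥ v| ≤ ∑ i, |A.mulVec v i| * |v i| := by
        rw [dotProduct]
        refine (Finset.abs_sum_le_sum_abs _ _).trans ?_
        simp [abs_mul]
    _ ≤ ∑ i, ((∑ j, |A i j|) * B) * B := by
        apply Finset.sum_le_sum
        intro i _
        exact mul_le_mul (key i) (hB i) (abs_nonneg _)
          (mul_nonneg (Finset.sum_nonneg fun j _ => abs_nonneg _) (hB0 i))
    _ = (∑ i, ∑ j, |A i j|) * B ^ 2 := by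
        simp [Finset.sum_mul, sq, mul_assoc]

end Aux

/-- Joint Hellinger convergence of the two-scale posterior and its finite
element approximation: if `G_ε → G_0` as `ε → 0` and `G^L → G_0` as `L → ∞`,
all uniformly bounded, then for any sequences `ε_n → 0`, `L_n → ∞` the
Hellinger distance between the corresponding Gibbs posteriors tends to `0`. -/


theorem hellinger_convergence_FE_approximation
    {U : Type*} [MeasurableSpace U] (ρ : Measure U) [IsProbabilityMeasure ρ]
    {N : ℕ} (S : Matrix (Fin N) (Fin N) ℝ) (hS : S.PosDef) (δ : Fin N → ℝ)
    (M : ℝ) (hM : 0 < M)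
    (Gep : ℝ → U → Fin N → ℝ) (Gfe : ℕ → U → Fin N → ℝ) (G0 : U → Fin N → ℝ)
    (hGepmeas : ∀ ε ∈ Set.Ioc (0 : ℝ) 1, Measurable (Gep ε))
    (hGfemeas : ∀ L, Measurable (Gfe L)) (hG0meas : Measurable G0)
    (hGepbdd : ∀ ε ∈ Set.Ioc (0 : ℝ) 1, ∀ z, euclNorm (Gep ε z) ≤ M)
    (hGfebdd : ∀ L, ∀ z, euclNorm (Gfe L z) ≤ M)
    (hG0bdd : ∀ z, euclNorm (G0 z) ≤ M)
    (hGepconv : ∀ z, Tendsto (fun ε => Gep ε z)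
        (nhdsWithin 0 (Set.Ioc (0 : ℝ) 1)) (nhds (G0 z)))
    (hGfeconv : ∀ z, Tendsto (fun L => Gfe L z) atTop (nhds (G0 z))) :
    ∀ (εseq : ℕ → ℝ) (Lseq : ℕ → ℕ),
      (∀ n, εseq n ∈ Set.Ioc (0 : ℝ) 1) → Tendsto εseq atTop (nhds 0) →
      Tendsto Lseq atTop atTop →
      Tendsto (fun n => hellingerDist ρ
          (gibbsDensity ρ (potential S δ (Gep (εseq n))))
          (gibbsDensity ρ (potential S δ (Gfe (Lseq n))))) atTop (nhds 0) := by
  intro εseq Lseq hεmem hεconv hLconv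
  set B : ℝ := euclNorm δ + M with hBdef
  set C : ℝ := 1 / 2 * ((∑ i, ∑ j, |S⁻¹ i j|) * B ^ 2) with hCdef
  -- potential bounds for any G bounded by M
  have hpotbound : ∀ (G : U → Fin N → ℝ), (∀ z, euclNorm (G z) ≤ M) →
      ∀ z, potential S δ G z ∈ Set.Icc (0:ℝ) C := by
    intro G hG z
    constructor
    · apply mul_nonneg (by norm_num)
      rw [dotProduct_comm]
      simpa using hS.inv.posSemidef.dotProduct_mulVec_nonneg (δ - G z)
    · rw [potential, hCdef]
      apply mul_le_mul_of_nonneg_left _ (by norm_num)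
      refine (le_abs_self _).trans ?_
      apply dot_bound
      intro i
      calc |(δ - G z) i| = |δ i + -(G z i)| := by simp [sub_eq_add_neg]
        _ ≤ |δ i| + |-(G z i)| := abs_add_le _ _
        _ = |δ i| + |G z i| := by rw [abs_neg]
        _ ≤ euclNorm δ + M := add_le_add (abs_le_euclNorm δ i)
            ((abs_le_euclNorm (G z) i).trans (hG z))
  -- pointwise convergence of potentials along the sequences
  have hεn : Tendsto εseq atTop (nhdsWithin 0 (Set.Ioc (0:ℝ) 1)) :=
    tendsto_nhdsWithin_of_tendsto_nhds_of_eventually_within _ hεconv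
      (Eventually.of_forall hεmem)
  have hpotconv_ep : ∀ z, Tendsto (fun n => potential S δ (Gep (εseq n)) z)
      atTop (nhds (potential S δ G0 z)) := fun z =>
    ((continuous_pot S⁻¹ δ).continuousAt.tendsto.comp ((hGepconv z).comp hεn) :)
  have hpotconv_fe : ∀ z, Tendsto (fun n => potential S δ (Gfe (Lseq n)) z)
      atTop (nhds (potential S δ G0 z)) := fun z =>
    ((continuous_pot S⁻¹ δ).continuousAt.tendsto.comp ((hGfeconv z).comp hLconv) :)
  have hpotmeas : ∀ (G : U → Fin N → ℝ), Measurable G →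
      Measurable (potential S δ G) := fun G hG =>
    ((continuous_pot S⁻¹ δ).measurable).comp hG
  -- partition functions
  set Z : (U → ℝ) → ℝ := fun Φ => ∫ w, Real.exp (-Φ w) ∂ρ with hZdef
  have hexpint : ∀ (G : U → Fin N → ℝ), Measurable G → (∀ z, euclNorm (G z) ≤ M) →
      Integrable (fun z => Real.exp (-(potential S δ G z))) ρ := by
    intro G hG hGb
    refine (integrable_const (1:ℝ)).mono'
      ((Real.measurable_exp.comp (hpotmeas G hG).neg).aestronglyMeasurable) ?_
    filter_upwards with z
    rw [Real.norm_eq_abs, abs_of_pos (Real.exp_pos _)]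
    exact Real.exp_le_one_iff.mpr (neg_nonpos.mpr (hpotbound G hGb z).1)
  have hZbound : ∀ (G : U → Fin N → ℝ), Measurable G → (∀ z, euclNorm (G z) ≤ M) →
      Real.exp (-C) ≤ Z (potential S δ G) := by
    intro G hG hGb
    calc Real.exp (-C) = ∫ _, Real.exp (-C) ∂ρ := by simp
      _ ≤ Z (potential S δ G) := by
          apply integral_mono (integrable_const _) (hexpint G hG hGb)
          intro z
          exact Real.exp_le_exp.mpr (neg_le_neg (hpotbound G hGb z).2)
  have hZconv : ∀ (Gn : ℕ → U → Fin N → ℝ), (∀ n, Measurable (Gn n)) →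
      (∀ n z, euclNorm (Gn n z) ≤ M) →
      (∀ z, Tendsto (fun n => potential S δ (Gn n) z) atTop
        (nhds (potential S δ G0 z))) →
      Tendsto (fun n => Z (potential S δ (Gn n))) atTop
        (nhds (Z (potential S δ G0))) := by
    intro Gn hmeas hbdd hconv
    apply tendsto_integral_of_dominated_convergence (fun _ => (1:ℝ))
    · intro n
      exact (Real.measurable_exp.comp (hpotmeas _ (hmeas n)).neg).aestronglyMeasurable
    · exact integrable_const 1
    · intro n
      filter_upwards with z
      rw [Real.norm_eq_abs, abs_of_pos (Real.exp_pos _)]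
      exact Real.exp_le_one_iff.mpr (neg_nonpos.mpr (hpotbound (Gn n) (hbdd n) z).1)
    · filter_upwards with z
      exact (Real.continuous_exp.continuousAt.tendsto.comp ((hconv z).neg) :)
  -- the measurable sequence hypotheses along the subsequences
  have hepmeas : ∀ n, Measurable (Gep (εseq n)) := fun n => hGepmeas _ (hεmem n)
  have hepbdd : ∀ n z, euclNorm (Gep (εseq n) z) ≤ M := fun n => hGepbdd _ (hεmem n)
  have hfemeas : ∀ n, Measurable (Gfe (Lseq n)) := fun n => hGfemeas _
  have hfebdd : ∀ n z, euclNorm (Gfe (Lseq n) z) ≤ M := fun n => hGfebdd _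
  have hZep : Tendsto (fun n => Z (potential S δ (Gep (εseq n)))) atTop
      (nhds (Z (potential S δ G0))) := hZconv _ hepmeas hepbdd hpotconv_ep
  have hZfe : Tendsto (fun n => Z (potential S δ (Gfe (Lseq n)))) atTop
      (nhds (Z (potential S δ G0))) := hZconv _ hfemeas hfebdd hpotconv_fe
  have hZ0pos : 0 < Z (potential S δ G0) :=
    lt_of_lt_of_le (Real.exp_pos _) (hZbound G0 hG0meas hG0bdd)
  -- pointwise convergence of gibbs densities
  have hdconv : ∀ (Gn : ℕ → U → Fin N → ℝ),
      (∀ z, Tendsto (fun n => potential S δ (Gn n) z) atTop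
        (nhds (potential S δ G0 z))) →
      Tendsto (fun n => Z (potential S δ (Gn n))) atTop
        (nhds (Z (potential S δ G0))) →
      ∀ z, Tendsto (fun n => gibbsDensity ρ (potential S δ (Gn n)) z) atTop
        (nhds (gibbsDensity ρ (potential S δ G0) z)) := by
    intro Gn hconv hZc z
    have hnum : Tendsto (fun n => Real.exp (-(potential S δ (Gn n) z))) atTop
        (nhds (Real.exp (-(potential S δ G0 z)))) :=
      (Real.continuous_exp.continuousAt.tendsto.comp ((hconv z).neg) :)
    exact hnum.div hZc (ne_of_gt hZ0pos)
  -- upper bound on densities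
  have hdbound : ∀ (G : U → Fin N → ℝ), Measurable G → (∀ z, euclNorm (G z) ≤ M) →
      ∀ z, gibbsDensity ρ (potential S δ G) z ∈ Set.Icc (0:ℝ) (Real.exp C) := by
    intro G hG hGb z
    have hZG := hZbound G hG hGb
    have hZGpos : 0 < Z (potential S δ G) := lt_of_lt_of_le (Real.exp_pos _) hZG
    constructor
    · exact div_nonneg (Real.exp_pos _).le hZGpos.le
    · rw [gibbsDensity]
      calc Real.exp (-(potential S δ G z)) / Z (potential S δ G)
          ≤ 1 / Real.exp (-C) :=
            div_le_div₀ (by norm_num)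
              (Real.exp_le_one_iff.mpr (neg_nonpos.mpr (hpotbound G hGb z).1))
              (Real.exp_pos _) hZG
        _ = Real.exp C := by rw [one_div, ← Real.exp_neg, neg_neg]
  -- the main integral tends to 0 by dominated convergence
  have hI : Tendsto (fun n => ∫ z,
      (Real.sqrt (gibbsDensity ρ (potential S δ (Gep (εseq n))) z) -
       Real.sqrt (gibbsDensity ρ (potential S δ (Gfe (Lseq n))) z)) ^ 2 ∂ρ)
      atTop (nhds 0) := by
    have h0 : (0:ℝ) = ∫ _, (0:ℝ) ∂ρ := by simp
    rw [h0]
    apply tendsto_integral_of_dominated_convergence (fun _ => 4 * Real.exp C)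
    · intro n
      have h1 : Measurable (gibbsDensity ρ (potential S δ (Gep (εseq n)))) :=
        (Real.measurable_exp.comp (hpotmeas _ (hepmeas n)).neg).div_const _
      have h2 : Measurable (gibbsDensity ρ (potential S δ (Gfe (Lseq n)))) :=
        (Real.measurable_exp.comp (hpotmeas _ (hfemeas n)).neg).div_const _
      exact ((((Real.continuous_sqrt.measurable.comp h1).sub
        (Real.continuous_sqrt.measurable.comp h2)).pow_const 2).aestronglyMeasurable)
    · exact integrable_const _
    · intro n
      filter_upwards with z
      set a := Real.sqrt (gibbsDensity ρ (potential S δ (Gep (εseq n))) z)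
      set b := Real.sqrt (gibbsDensity ρ (potential S δ (Gfe (Lseq n))) z)
      have haf := hdbound _ (hepmeas n) (hepbdd n) z
      have hbf := hdbound _ (hfemeas n) (hfebdd n) z
      have ha2 : a ^ 2 ≤ Real.exp C := by
        rw [sq, Real.mul_self_sqrt haf.1]; exact haf.2
      have hb2 : b ^ 2 ≤ Real.exp C := by
        rw [sq, Real.mul_self_sqrt hbf.1]; exact hbf.2
      rw [Real.norm_eq_abs, abs_of_nonneg (sq_nonneg _)]
      nlinarith [sq_nonneg (a + b)]
    · filter_upwards with z
      have h1 := hdconv _ hpotconv_ep hZep z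
      have h2 := hdconv _ hpotconv_fe hZfe z
      have hs1 : Tendsto (fun n => Real.sqrt
          (gibbsDensity ρ (potential S δ (Gep (εseq n))) z)) atTop
          (nhds (Real.sqrt (gibbsDensity ρ (potential S δ G0) z))) :=
        (Real.continuous_sqrt.continuousAt.tendsto.comp h1 :)
      have hs2 : Tendsto (fun n => Real.sqrt
          (gibbsDensity ρ (potential S δ (Gfe (Lseq n))) z)) atTop
          (nhds (Real.sqrt (gibbsDensity ρ (potential S δ G0) z))) :=
        (Real.continuous_sqrt.continuousAt.tendsto.comp h2 :)
      have := (hs1.sub hs2).pow 2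
      simpa using this
  -- conclude
  have h : Tendsto (fun n => (1:ℝ)/2 * ∫ z,
      (Real.sqrt (gibbsDensity ρ (potential S δ (Gep (εseq n))) z) -
       Real.sqrt (gibbsDensity ρ (potential S δ (Gfe (Lseq n))) z)) ^ 2 ∂ρ)
      atTop (nhds ((1:ℝ)/2 * 0)) := hI.const_mul _
  rw [mul_zero] at h
  have h2 := (Real.continuous_sqrt.continuousAt.tendsto).comp h
  rw [Real.sqrt_zero] at h2
  exact h2
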